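/- Fix integers α_1 > α_2 > ⋯ > α_N ≥ 1 and m_1, …, m_N ≥ 1, set n := Σ_r α_r m_r, and for a matrix X of form (0T0) let φ(X) := (A^{11}_0, …, A^{NN}_0) be the tuple of leading Toeplitz coefficients of its diagonal blocks. Then: (i) for all X, Y of form (0T0), φ(XY)_r = φ(X)_r·φ(Y)_r for every r; (ii) X is invertible if and only if every A^{rr}_0 ∈ GL_{m_r}(ℂ); (iii) every invertible X of form (0T0) factors uniquely as X = D·U, where D := ⊕_{r=1}^N (A^{rr}_0 ⊕ ⋯ ⊕ A^{rr}_0) (α_r copies) and U has form (0T0) with φ(U)_r = I_{m_r} for all r. In particular the set 𝕌 of invertible matrices of form (0T0) with φ = (I_{m_1},…,I_{m_N}) is a normal subgroup of the group 𝕋 of all invertible matrices of form (0T0). -/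

import Mathlib

open Matrix

noncomputable section

/-- Form (0T0): block matrix partitioned by Jordan structure `(α, m)` whose `(r,s)` block,
viewed as an `α r × α s` array of `m r × m s` blocks, is a rectangular block
upper-triangular Toeplitz matrix aligned to the top-right corner. -/
def IsForm0T0 {N : ℕ} (α m : Fin N → ℕ)
    (X : Matrix (Σ r : Fin N, Fin (α r) × Fin (m r)) (Σ r : Fin N, Fin (α r) × Fin (m r)) ℂ) :
    Prop :=
  ∃ A : ∀ r s : Fin N, ℕ → Matrix (Fin (m r)) (Fin (m s)) ℂ,
    ∀ (r s : Fin N) (i : Fin (α r)) (j : Fin (α s)) (a : Fin (m r)) (b : Fin (m s)),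
      X ⟨r, (i, a)⟩ ⟨s, (j, b)⟩ =
        if (i : ℕ) + (α s - min (α r) (α s)) ≤ (j : ℕ) then
          A r s ((j : ℕ) - (i : ℕ) - (α s - min (α r) (α s))) a b
        else 0

/-- `E_b(I_m)`: the `bm × bm` block matrix with `I_m` on the block anti-diagonal. -/
def revE (b m : ℕ) : Matrix (Fin b × Fin m) (Fin b × Fin m) ℂ :=
  Matrix.of fun p q => if (p.1 : ℕ) + (q.1 : ℕ) + 1 = b ∧ p.2 = q.2 then 1 else 0

/-- `F = ⊕_r E_{α r}(I_{m r})`. -/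
def bigF {N : ℕ} (α m : Fin N → ℕ) :
    Matrix (Σ r : Fin N, Fin (α r) × Fin (m r)) (Σ r : Fin N, Fin (α r) × Fin (m r)) ℂ :=
  Matrix.blockDiagonal' fun r => revE (α r) (m r)

/-- The `n × n` upper-triangular Jordan block `J_n(λ)`. -/
def Jmat (n : ℕ) (lam : ℂ) : Matrix (Fin n) (Fin n) ℂ :=
  Matrix.of fun i j => if (j : ℕ) = (i : ℕ) then lam else if (j : ℕ) = (i : ℕ) + 1 then 1 else 0

/-- The `n × n` backward identity matrix `E_n`. -/
def ErevC (n : ℕ) : Matrix (Fin n) (Fin n) ℂ :=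
  Matrix.of fun i j => if (i : ℕ) + (j : ℕ) + 1 = n then 1 else 0

/-- `P_n = (1/√2)(I + i E_n)`. -/
noncomputable def Pmat (n : ℕ) : Matrix (Fin n) (Fin n) ℂ :=
  (Real.sqrt 2 : ℂ)⁻¹ • (1 + Complex.I • ErevC n)

/-- `P_n⁻¹ = (1/√2)(I − i E_n)`. -/
noncomputable def PmatInv (n : ℕ) : Matrix (Fin n) (Fin n) ℂ :=
  (Real.sqrt 2 : ℂ)⁻¹ • (1 - Complex.I • ErevC n)

/-- The symmetric canonical form `K_n(λ) = P_n J_n(λ) P_n⁻¹` of a Jordan block. -/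
noncomputable def Kmat (n : ℕ) (lam : ℂ) : Matrix (Fin n) (Fin n) ℂ :=
  Pmat n * Jmat n lam * PmatInv n

/-- `T(A_0, …)`: the `β × β` block upper-triangular Toeplitz matrix with blocks `A_j`. -/
def blkToeplitz (β p q : ℕ) (A : ℕ → Matrix (Fin p) (Fin q) ℂ) :
    Matrix (Fin β × Fin p) (Fin β × Fin q) ℂ :=
  Matrix.of fun x y =>
    if (x.1 : ℕ) ≤ (y.1 : ℕ) then A ((y.1 : ℕ) - (x.1 : ℕ)) x.2 y.2 else 0

/-- The `(i,i)`-th `m r × m r` entry-block of the `(r,r)` diagonal block of `X`; for a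
matrix of form (0T0) this is the leading Toeplitz coefficient `A^{rr}_0`. -/
def diagLead {N : ℕ} (α m : Fin N → ℕ)
    (X : Matrix (Σ r : Fin N, Fin (α r) × Fin (m r)) (Σ r : Fin N, Fin (α r) × Fin (m r)) ℂ)
    (r : Fin N) (i : Fin (α r)) : Matrix (Fin (m r)) (Fin (m r)) ℂ :=
  Matrix.of fun a b => X ⟨r, (i, a)⟩ ⟨r, (i, b)⟩

/-- The space of skew-symmetric matrices commuting with `S`. -/
def skewCommSubmodule (ι : Type*) [Fintype ι] [DecidableEq ι] (S : Matrix ι ι ℂ) :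
    Submodule ℂ (Matrix ι ι ℂ) where
  carrier := {X | Xᵀ = -X ∧ X * S = S * X}
  add_mem' := by
    rintro a b ⟨ha1, ha2⟩ ⟨hb1, hb2⟩
    refine ⟨?_, ?_⟩
    · rw [Matrix.transpose_add, ha1, hb1, neg_add]
    · rw [add_mul, mul_add, ha2, hb2]
  zero_mem' := by
    refine ⟨?_, ?_⟩
    · simp
    · simp
  smul_mem' := by
    rintro c a ⟨h1, h2⟩
    refine ⟨?_, ?_⟩
    · rw [Matrix.transpose_smul, h1, smul_neg]
    · rw [Matrix.smul_mul, Matrix.mul_smul, h2]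

/-- The isotropy group (as a set) of `S` under orthogonal similarity. -/
def sigmaSet {ι : Type*} [Fintype ι] [DecidableEq ι] (S : Matrix ι ι ℂ) : Set (Matrix ι ι ℂ) :=
  {Q | Qᵀ * Q = 1 ∧ Qᵀ * S * Q = S}

namespace Stmt9Aux

variable {N : ℕ} (α m : Fin N → ℕ)

abbrev Idx (α m : Fin N → ℕ) : Type := Σ r : Fin N, Fin (α r) × Fin (m r)

/-- The nilpotent "shift" matrix `H = ⊕_r J_{α r}(0) ⊗ I_{m r}`. -/
def Hmat : Matrix (Idx α m) (Idx α m) ℂ := fun p q =>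
  if p.1 = q.1 ∧ (q.2.1 : ℕ) = (p.2.1 : ℕ) + 1 ∧ (p.2.2 : ℕ) = (q.2.2 : ℕ) then 1 else 0

variable {α m}

lemma mul_H_apply (X : Matrix (Idx α m) (Idx α m) ℂ) (r s : Fin N) (i : Fin (α r))
    (j : Fin (α s)) (a : Fin (m r)) (b : Fin (m s)) :
    (X * Hmat α m) ⟨r, (i, a)⟩ ⟨s, (j, b)⟩ =
      if h : 0 < (j : ℕ) then
        X ⟨r, (i, a)⟩ ⟨s, (⟨(j : ℕ) - 1, lt_of_le_of_lt (Nat.sub_le _ _) j.isLt⟩, b)⟩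
      else 0 := by
  rw [Matrix.mul_apply]
  by_cases h : 0 < (j : ℕ)
  · rw [dif_pos h]
    rw [Finset.sum_eq_single
      (⟨s, (⟨(j : ℕ) - 1, lt_of_le_of_lt (Nat.sub_le _ _) j.isLt⟩, b)⟩ : Idx α m)]
    · rw [show Hmat α m ⟨s, (⟨(j : ℕ) - 1, lt_of_le_of_lt (Nat.sub_le _ _) j.isLt⟩, b)⟩
          ⟨s, (j, b)⟩ = 1 from if_pos ⟨rfl, show (j : ℕ) = (j : ℕ) - 1 + 1 by omega, rfl⟩,
        mul_one]
    · rintro ⟨t, k, c⟩ - hne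
      rw [show Hmat α m ⟨t, (k, c)⟩ ⟨s, (j, b)⟩ = 0 from ?_, mul_zero]
      refine if_neg ?_
      rintro ⟨h1, h2, h3⟩
      replace h1 : t = s := h1
      subst h1
      replace h2 : (j : ℕ) = (k : ℕ) + 1 := h2
      replace h3 : (c : ℕ) = (b : ℕ) := h3
      exact hne (by
        congr 1
        exact Prod.ext (Fin.ext (show (k : ℕ) = (j : ℕ) - 1 by omega)) (Fin.ext h3))
    · intro hmem; exact absurd (Finset.mem_univ _) hmem
  · rw [dif_neg h]
    apply Finset.sum_eq_zero
    rintro ⟨t, k, c⟩ -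
    rw [show Hmat α m ⟨t, (k, c)⟩ ⟨s, (j, b)⟩ = 0 from ?_, mul_zero]
    refine if_neg ?_
    rintro ⟨h1, h2, h3⟩
    replace h2 : (j : ℕ) = (k : ℕ) + 1 := h2
    omega

lemma H_mul_apply (X : Matrix (Idx α m) (Idx α m) ℂ) (r : Fin N) (i : Fin (α r))
    (a : Fin (m r)) (q : Idx α m) :
    (Hmat α m * X) ⟨r, (i, a)⟩ q =
      if h : (i : ℕ) + 1 < α r then X ⟨r, (⟨(i : ℕ) + 1, h⟩, a)⟩ q else 0 := by
  rw [Matrix.mul_apply]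
  by_cases h : (i : ℕ) + 1 < α r
  · rw [dif_pos h]
    rw [Finset.sum_eq_single (⟨r, (⟨(i : ℕ) + 1, h⟩, a)⟩ : Idx α m)]
    · rw [show Hmat α m ⟨r, (i, a)⟩ ⟨r, (⟨(i : ℕ) + 1, h⟩, a)⟩ = 1 from
        if_pos ⟨rfl, rfl, rfl⟩, one_mul]
    · rintro ⟨t, k, c⟩ - hne
      rw [show Hmat α m ⟨r, (i, a)⟩ ⟨t, (k, c)⟩ = 0 from ?_, zero_mul]
      refine if_neg ?_
      rintro ⟨h1, h2, h3⟩
      replace h1 : r = t := h1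
      subst h1
      replace h2 : (k : ℕ) = (i : ℕ) + 1 := h2
      replace h3 : (a : ℕ) = (c : ℕ) := h3
      exact hne (by
        congr 1
        exact Prod.ext (Fin.ext (show (k : ℕ) = (i : ℕ) + 1 from h2)) (Fin.ext h3.symm))
    · intro hmem; exact absurd (Finset.mem_univ _) hmem
  · rw [dif_neg h]
    apply Finset.sum_eq_zero
    rintro ⟨t, k, c⟩ -
    rw [show Hmat α m ⟨r, (i, a)⟩ ⟨t, (k, c)⟩ = 0 from ?_, zero_mul]
    refine if_neg ?_
    rintro ⟨h1, h2, h3⟩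
    replace h1 : r = t := h1
    subst h1
    replace h2 : (k : ℕ) = (i : ℕ) + 1 := h2
    omega

lemma recast (X : Matrix (Idx α m) (Idx α m) ℂ) (r s : Fin N) {i i' : ℕ} (hi : i < α r)
    (hi' : i' < α r) {j j' : ℕ} (hj : j < α s) (hj' : j' < α s) (a : Fin (m r)) (b : Fin (m s))
    (e1 : i = i') (e2 : j = j') :
    X ⟨r, (⟨i, hi⟩, a)⟩ ⟨s, (⟨j, hj⟩, b)⟩ = X ⟨r, (⟨i', hi'⟩, a)⟩ ⟨s, (⟨j', hj'⟩, b)⟩ := by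
  subst e1; subst e2; rfl

section Comm

variable {X : Matrix (Idx α m) (Idx α m) ℂ} (hc : X * Hmat α m = Hmat α m * X)

include hc

lemma comm_rel (r s : Fin N) (i : ℕ) (hi : i < α r) (j : ℕ) (hj : j + 1 < α s)
    (a : Fin (m r)) (b : Fin (m s)) :
    X ⟨r, (⟨i, hi⟩, a)⟩ ⟨s, (⟨j, by omega⟩, b)⟩ =
      if h : i + 1 < α r then X ⟨r, (⟨i + 1, h⟩, a)⟩ ⟨s, (⟨j + 1, hj⟩, b)⟩ else 0 := by
  have h := congrFun (congrFun hc ⟨r, (⟨i, hi⟩, a)⟩) ⟨s, (⟨j + 1, hj⟩, b)⟩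
  rw [mul_H_apply, H_mul_apply, dif_pos (show 0 < ((⟨j + 1, hj⟩ : Fin (α s)) : ℕ) from
    Nat.succ_pos j)] at h
  rw [← h]
  exact recast X r s _ _ _ _ a b rfl (show j + 1 - 1 = j by omega)

lemma comm_col0 (r s : Fin N) (i : ℕ) (hi : i + 1 < α r) (h0s : 0 < α s)
    (a : Fin (m r)) (b : Fin (m s)) :
    X ⟨r, (⟨i + 1, hi⟩, a)⟩ ⟨s, (⟨0, h0s⟩, b)⟩ = 0 := by
  have h := congrFun (congrFun hc ⟨r, (⟨i, by omega⟩, a)⟩) ⟨s, (⟨0, h0s⟩, b)⟩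
  rw [mul_H_apply, H_mul_apply, dif_neg (show ¬ 0 < ((⟨0, h0s⟩ : Fin (α s)) : ℕ) from
    by simp), dif_pos (show i + 1 < α r from hi)] at h
  exact h.symm

lemma comm_step (r s : Fin N) (i j : ℕ) (h1 : i + 1 < α r) (h2 : j + 1 < α s)
    (a : Fin (m r)) (b : Fin (m s)) :
    X ⟨r, (⟨i, by omega⟩, a)⟩ ⟨s, (⟨j, by omega⟩, b)⟩ =
      X ⟨r, (⟨i + 1, h1⟩, a)⟩ ⟨s, (⟨j + 1, h2⟩, b)⟩ := by
  have h := comm_rel hc r s i (by omega) j h2 a b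
  rw [dif_pos h1] at h
  rw [← h]

lemma comm_lastrow (r s : Fin N) (h0r : 0 < α r) (j : ℕ) (hj : j + 1 < α s)
    (a : Fin (m r)) (b : Fin (m s)) :
    X ⟨r, (⟨α r - 1, by omega⟩, a)⟩ ⟨s, (⟨j, by omega⟩, b)⟩ = 0 := by
  have h := comm_rel hc r s (α r - 1) (by omega) j hj a b
  rw [dif_neg (by omega)] at h
  rw [← h]

lemma comm_shift (r s : Fin N) (k : ℕ) :
    ∀ (i j : ℕ) (hi : i + k < α r) (hj : j + k < α s) (a : Fin (m r)) (b : Fin (m s)),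
    X ⟨r, (⟨i, by omega⟩, a)⟩ ⟨s, (⟨j, by omega⟩, b)⟩ =
      X ⟨r, (⟨i + k, hi⟩, a)⟩ ⟨s, (⟨j + k, hj⟩, b)⟩ := by
  induction k with
  | zero => intro i j hi hj a b; exact recast X r s _ _ _ _ a b rfl rfl
  | succ k ih =>
    intro i j hi hj a b
    have h1 : i + k < α r := by omega
    have h2 : j + k < α s := by omega
    rw [ih i j h1 h2 a b]
    have h := comm_step hc r s (i + k) (j + k) (by omega) (by omega) a b
    rw [recast X r s h1 (by omega) h2 (by omega) a b rfl rfl, h]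
    exact recast X r s _ _ _ _ a b (by omega) (by omega)

lemma form_of_comm (hα1 : ∀ r, 0 < α r) : IsForm0T0 α m X := by
  refine ⟨fun r s d => Matrix.of fun a b =>
    if h : d + (α s - min (α r) (α s)) < α s then
      X ⟨r, (⟨0, hα1 r⟩, a)⟩ ⟨s, (⟨d + (α s - min (α r) (α s)), h⟩, b)⟩ else 0, ?_⟩
  intro r s i j a b
  have hi := i.isLt
  have hj := j.isLt
  set c := α s - min (α r) (α s) with hcdef
  have hmin : min (α r) (α s) ≤ α r ∧ min (α r) (α s) ≤ α s ∧
      (min (α r) (α s) = α r ∨ min (α r) (α s) = α s) := by omega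
  have hXrw : X ⟨r, (i, a)⟩ ⟨s, (j, b)⟩ =
      X ⟨r, (⟨(i : ℕ), hi⟩, a)⟩ ⟨s, (⟨(j : ℕ), hj⟩, b)⟩ := rfl
  by_cases hle : (i : ℕ) + c ≤ (j : ℕ)
  · rw [if_pos hle]
    simp only [Matrix.of_apply]
    rw [dif_pos (show (j : ℕ) - (i : ℕ) - c + c < α s by omega)]
    rw [comm_shift hc r s (i : ℕ) 0 ((j : ℕ) - (i : ℕ) - c + c) (by omega) (by omega) a b]
    rw [hXrw]
    exact (recast X r s _ _ _ _ a b (by omega) (by omega)).symm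
  · rw [if_neg hle]
    by_cases hji : (j : ℕ) < (i : ℕ)
    · rw [hXrw,
        recast X r s hi (show (i : ℕ) - (j : ℕ) + (j : ℕ) < α r by omega) hj
          (show 0 + (j : ℕ) < α s by omega) a b (by omega) (by omega),
        ← comm_shift hc r s ((j : ℕ)) ((i : ℕ) - (j : ℕ)) 0 (by omega) (by omega) a b]
      rcases Nat.exists_eq_add_of_lt (show 0 < (i : ℕ) - (j : ℕ) by omega) with ⟨t, ht⟩
      rw [recast X r s (by omega) (show t + 1 < α r by omega) (by omega) (by omega) a b
        (by omega) rfl]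
      exact comm_col0 hc r s t (by omega) (by omega) a b
    · -- i ≤ j < i + c
      have hc0 : 0 < c := by omega
      have hc3 : c = 0 ∨ α r + c = α s := by
        rcases Nat.le_total (α r) (α s) with h5 | h5
        · right; rw [hcdef, min_eq_left h5]; omega
        · left; rw [hcdef, min_eq_right h5]; omega
      rcases hc3 with h5 | h5
      · exact absurd h5 (by omega)
      rw [hXrw, comm_shift hc r s (α r - 1 - (i : ℕ)) (i : ℕ) (j : ℕ)
          (by omega) (by omega) a b,
        recast X r s (by omega) (show α r - 1 < α r by omega) (by omega)
          (show (j : ℕ) + (α r - 1 - (i : ℕ)) < α s by omega) a b (by omega) rfl]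
      exact comm_lastrow hc r s (hα1 r) _ (by omega) a b

end Comm

lemma comm_of_form {X : Matrix (Idx α m) (Idx α m) ℂ} (hX : IsForm0T0 α m X) :
    X * Hmat α m = Hmat α m * X := by
  obtain ⟨A, hA⟩ := hX
  ext ⟨r, i, a⟩ ⟨s, j, b⟩
  rw [mul_H_apply, H_mul_apply]
  have hi := i.isLt
  have hj := j.isLt
  have hmin : min (α r) (α s) ≤ α r ∧ min (α r) (α s) ≤ α s ∧
      (min (α r) (α s) = α r ∨ min (α r) (α s) = α s) := by omega
  by_cases h1 : 0 < (j : ℕ)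
  · rw [dif_pos h1]
    by_cases h2 : (i : ℕ) + 1 < α r
    · rw [dif_pos h2, hA, hA]
      by_cases h3 : (i : ℕ) + 1 + (α s - min (α r) (α s)) ≤ (j : ℕ)
      · rw [if_pos (show (i : ℕ) + (α s - min (α r) (α s)) ≤
            ((⟨(j : ℕ) - 1, _⟩ : Fin (α s)) : ℕ) by show _ ≤ (j : ℕ) - 1; omega),
          if_pos (show ((⟨(i : ℕ) + 1, h2⟩ : Fin (α r)) : ℕ) + (α s - min (α r) (α s)) ≤
            (j : ℕ) from h3)]
        congr 1
        show (j : ℕ) - 1 - (i : ℕ) - _ = (j : ℕ) - ((i : ℕ) + 1) - _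
        omega
      · rw [if_neg (show ¬ ((i : ℕ) + (α s - min (α r) (α s)) ≤
            ((⟨(j : ℕ) - 1, _⟩ : Fin (α s)) : ℕ)) by show ¬ (_ ≤ (j : ℕ) - 1); omega),
          if_neg (show ¬ (((⟨(i : ℕ) + 1, h2⟩ : Fin (α r)) : ℕ) +
            (α s - min (α r) (α s)) ≤ (j : ℕ)) from h3)]
    · rw [dif_neg h2, hA, if_neg]
      show ¬ ((i : ℕ) + (α s - min (α r) (α s)) ≤ (j : ℕ) - 1)
      omega
  · rw [dif_neg h1]
    by_cases h2 : (i : ℕ) + 1 < α r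
    · rw [dif_pos h2, hA, if_neg]
      show ¬ (((i : ℕ) + 1) + (α s - min (α r) (α s)) ≤ (j : ℕ))
      omega
    · rw [dif_neg h2]

lemma apply_diag {X : Matrix (Idx α m) (Idx α m) ℂ} (hX : IsForm0T0 α m X)
    (hα1 : ∀ r, 0 < α r) (r : Fin N) (i : Fin (α r)) (a b : Fin (m r)) :
    X ⟨r, (i, a)⟩ ⟨r, (i, b)⟩ = diagLead α m X r ⟨0, hα1 r⟩ a b := by
  obtain ⟨A, hA⟩ := hX
  show _ = X ⟨r, (⟨0, hα1 r⟩, a)⟩ ⟨r, (⟨0, hα1 r⟩, b)⟩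
  rw [hA, hA, if_pos (by omega), if_pos (by omega),
    show (i : ℕ) - (i : ℕ) - (α r - min (α r) (α r)) =
      ((⟨0, hα1 r⟩ : Fin (α r)) : ℕ) - ((⟨0, hα1 r⟩ : Fin (α r)) : ℕ) -
        (α r - min (α r) (α r)) by omega]

lemma diagLead_one (hα1 : ∀ r, 0 < α r) (r : Fin N) (i : Fin (α r)) :
    diagLead α m (1 : Matrix (Idx α m) (Idx α m) ℂ) r i = 1 := by
  ext a b
  show (1 : Matrix (Idx α m) (Idx α m) ℂ) ⟨r, (i, a)⟩ ⟨r, (i, b)⟩ = _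
  rw [Matrix.one_apply, Matrix.one_apply]
  by_cases h : a = b
  · subst h; rw [if_pos rfl, if_pos rfl]
  · rw [if_neg (fun heq => h (by simpa using heq)), if_neg h]

lemma diagLead_mul (hαa : StrictAnti α) (hα1 : ∀ r, 0 < α r)
    {X Y : Matrix (Idx α m) (Idx α m) ℂ} (hX : IsForm0T0 α m X) (hY : IsForm0T0 α m Y)
    (r : Fin N) (i : Fin (α r)) :
    diagLead α m (X * Y) r i =
      diagLead α m X r ⟨0, hα1 r⟩ * diagLead α m Y r ⟨0, hα1 r⟩ := by
  ext a b
  show (X * Y) ⟨r, (i, a)⟩ ⟨r, (i, b)⟩ = _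
  rw [Matrix.mul_apply, Matrix.mul_apply]
  have hinj : Function.Injective (fun c : Fin (m r) => (⟨r, (i, c)⟩ : Idx α m)) := by
    intro c c' h
    simpa using h
  have hzero : ∀ x ∈ (Finset.univ : Finset (Idx α m)),
      x ∉ Finset.univ.map ⟨_, hinj⟩ → X ⟨r, (i, a)⟩ x * Y x ⟨r, (i, b)⟩ = 0 := by
    rintro ⟨t, k, c⟩ - hx
    have hne : ¬ (t = r ∧ (k : ℕ) = (i : ℕ)) := by
      rintro ⟨h1, h2⟩
      subst h1
      exact hx (Finset.mem_map.mpr ⟨c, Finset.mem_univ _, by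
        simp only [Function.Embedding.coeFn_mk]
        congr 2
        exact (Fin.ext h2.symm : i = k)⟩)
    obtain ⟨A, hA⟩ := hX
    obtain ⟨B, hB⟩ := hY
    rw [hA, hB]
    by_cases h1 : (i : ℕ) + (α t - min (α r) (α t)) ≤ (k : ℕ)
    · by_cases h2 : (k : ℕ) + (α r - min (α t) (α r)) ≤ (i : ℕ)
      · exfalso
        have hm1 : min (α r) (α t) ≤ α r ∧ min (α r) (α t) ≤ α t :=
          ⟨Nat.min_le_left _ _, Nat.min_le_right _ _⟩
        have hm2 : min (α t) (α r) = min (α r) (α t) := Nat.min_comm _ _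
        have hrt : α t = α r := by omega
        exact hne ⟨hαa.injective hrt, by omega⟩
      · rw [if_neg h2, mul_zero]
    · rw [if_neg h1, zero_mul]
  rw [← Finset.sum_subset (Finset.subset_univ _) hzero, Finset.sum_map]
  refine Finset.sum_congr rfl fun c _ => ?_
  simp only [Function.Embedding.coeFn_mk]
  rw [apply_diag hX hα1, apply_diag hY hα1]

lemma comm_inv {X : Matrix (Idx α m) (Idx α m) ℂ}
    (hcm : X * Hmat α m = Hmat α m * X) (hu : IsUnit X) :
    X⁻¹ * Hmat α m = Hmat α m * X⁻¹ := by
  have h2 : Commute (↑hu.unit) (Hmat α m) := by rwa [hu.unit_spec]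
  have h3 := h2.units_inv_left
  rwa [Matrix.coe_units_inv, hu.unit_spec] at h3

lemma unit_of_diag (hαa : StrictAnti α) (hα1 : ∀ r, 0 < α r)
    {X : Matrix (Idx α m) (Idx α m) ℂ} (hX : IsForm0T0 α m X)
    (h : ∀ r, IsUnit (diagLead α m X r ⟨0, hα1 r⟩)) : IsUnit X := by
  rw [Matrix.isUnit_iff_isUnit_det, isUnit_iff_ne_zero]
  have hbt : X.BlockTriangular (fun x : Idx α m => toLex ((x.2.1 : ℕ), x.1)) := by
    rintro ⟨r, i, a⟩ ⟨s, j, b⟩ hlt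
    rw [Prod.Lex.lt_iff] at hlt
    obtain ⟨A, hA⟩ := hX
    rw [hA, if_neg]
    have hm1 : min (α r) (α s) ≤ α r ∧ min (α r) (α s) ≤ α s :=
      ⟨Nat.min_le_left _ _, Nat.min_le_right _ _⟩
    rcases hlt with h1 | ⟨h1, h2⟩
    · replace h1 : (j : ℕ) < (i : ℕ) := h1
      omega
    · replace h1 : (j : ℕ) = (i : ℕ) := h1
      replace h2 : s < r := h2
      have h3 : α r < α s := hαa h2
      have hj := j.isLt
      omega
  rw [hbt.det]
  rw [Finset.prod_ne_zero_iff]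
  rintro k hk
  rw [Finset.mem_image] at hk
  obtain ⟨⟨r, i, a⟩, -, rfl⟩ := hk
  have hgbij : Function.Bijective (fun c : Fin (m r) =>
      (⟨⟨r, (i, c)⟩, rfl⟩ :
        {x : Idx α m // (fun x : Idx α m => toLex ((x.2.1 : ℕ), x.1)) x =
          (fun x : Idx α m => toLex ((x.2.1 : ℕ), x.1)) ⟨r, (i, a)⟩})) := by
    constructor
    · intro c c' hcc
      have := congrArg (fun z => z.1) hcc
      simpa using this
    · rintro ⟨⟨s, j, b⟩, hb⟩
      have hb2 : (((j : ℕ), s) : ℕ × Fin N) = (((i : ℕ), r) : ℕ × Fin N) := hb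
      rw [Prod.mk.injEq] at hb2
      obtain ⟨h1, h2⟩ := hb2
      subst h2
      have h3 : j = i := Fin.ext h1
      subst h3
      exact ⟨b, rfl⟩
  set e := Equiv.ofBijective _ hgbij with he
  have hsq : X.toSquareBlock (fun x : Idx α m => toLex ((x.2.1 : ℕ), x.1))
        ((fun x : Idx α m => toLex ((x.2.1 : ℕ), x.1)) ⟨r, (i, a)⟩) =
      (diagLead α m X r ⟨0, hα1 r⟩).submatrix e.symm e.symm := by
    ext x y
    have hx : x.1 = ⟨r, (i, e.symm x)⟩ :=
      (congrArg Subtype.val (e.apply_symm_apply x)).symm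
    have hy : y.1 = ⟨r, (i, e.symm y)⟩ :=
      (congrArg Subtype.val (e.apply_symm_apply y)).symm
    show X x.1 y.1 = diagLead α m X r ⟨0, hα1 r⟩ (e.symm x) (e.symm y)
    rw [hx, hy, apply_diag hX hα1]
  rw [hsq, Matrix.det_submatrix_equiv_self]
  exact isUnit_iff_ne_zero.mp ((Matrix.isUnit_iff_isUnit_det _).mp (h r))

lemma diag_of_unit (hαa : StrictAnti α) (hα1 : ∀ r, 0 < α r)
    {X : Matrix (Idx α m) (Idx α m) ℂ} (hX : IsForm0T0 α m X) (hu : IsUnit X)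
    (r : Fin N) : IsUnit (diagLead α m X r ⟨0, hα1 r⟩) := by
  have hdet : IsUnit X.det := (Matrix.isUnit_iff_isUnit_det X).mp hu
  have hXi : IsForm0T0 α m X⁻¹ := form_of_comm (comm_inv (comm_of_form hX) hu) hα1
  have h1 : X * X⁻¹ = 1 := Matrix.mul_nonsing_inv X hdet
  have hL : diagLead α m X r ⟨0, hα1 r⟩ * diagLead α m X⁻¹ r ⟨0, hα1 r⟩ = 1 := by
    rw [← diagLead_mul hαa hα1 hX hXi r ⟨0, hα1 r⟩, h1, diagLead_one hα1]
  rw [Matrix.isUnit_iff_isUnit_det]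
  exact IsUnit.of_mul_eq_one _ (by rw [← Matrix.det_mul, hL, Matrix.det_one])

variable (α m) in
def Dmat (L : ∀ r : Fin N, Matrix (Fin (m r)) (Fin (m r)) ℂ) :
    Matrix (Idx α m) (Idx α m) ℂ :=
  Matrix.blockDiagonal' fun r => Matrix.of fun p q : Fin (α r) × Fin (m r) =>
    if p.1 = q.1 then L r p.2 q.2 else 0

lemma Dmat_apply_eq (L : ∀ r : Fin N, Matrix (Fin (m r)) (Fin (m r)) ℂ) (r : Fin N)
    (i j : Fin (α r)) (a b : Fin (m r)) :
    Dmat α m L ⟨r, (i, a)⟩ ⟨r, (j, b)⟩ = if i = j then L r a b else 0 := by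
  exact Matrix.blockDiagonal'_apply_eq
    (fun r => Matrix.of fun p q : Fin (α r) × Fin (m r) =>
      if p.1 = q.1 then L r p.2 q.2 else 0) r (i, a) (j, b)

lemma Dmat_apply_ne (L : ∀ r : Fin N, Matrix (Fin (m r)) (Fin (m r)) ℂ) {r s : Fin N}
    (h : r ≠ s) (p : Fin (α r) × Fin (m r)) (q : Fin (α s) × Fin (m s)) :
    Dmat α m L ⟨r, p⟩ ⟨s, q⟩ = 0 :=
  Matrix.blockDiagonal'_apply_ne _ _ _ h

lemma Dmat_comm (L : ∀ r : Fin N, Matrix (Fin (m r)) (Fin (m r)) ℂ) :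
    Dmat α m L * Hmat α m = Hmat α m * Dmat α m L := by
  ext ⟨r, i, a⟩ ⟨s, j, b⟩
  rw [mul_H_apply, H_mul_apply]
  by_cases hrs : r = s
  · subst hrs
    by_cases h1 : 0 < (j : ℕ)
    · rw [dif_pos h1, Dmat_apply_eq]
      by_cases h2 : (i : ℕ) + 1 < α r
      · rw [dif_pos h2, Dmat_apply_eq]
        by_cases h3 : (i : ℕ) + 1 = (j : ℕ)
        · rw [if_pos (Fin.ext (show (i : ℕ) = (j : ℕ) - 1 by omega)),
            if_pos (Fin.ext (show (i : ℕ) + 1 = (j : ℕ) from h3))]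
        · rw [if_neg (fun heq => h3 (by
              have h4 : (i : ℕ) = (j : ℕ) - 1 := congrArg Fin.val heq
              omega)),
            if_neg (fun heq => h3 (congrArg Fin.val heq))]
      · rw [dif_neg h2, if_neg]
        intro heq
        have h4 : (i : ℕ) = (j : ℕ) - 1 := congrArg Fin.val heq
        have hj := j.isLt
        omega
    · rw [dif_neg h1]
      by_cases h2 : (i : ℕ) + 1 < α r
      · rw [dif_pos h2, Dmat_apply_eq, if_neg]
        intro heq
        have h4 : (i : ℕ) + 1 = (j : ℕ) := congrArg Fin.val heq
        omega
      · rw [dif_neg h2]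
  · split_ifs <;> simp [Dmat_apply_ne L hrs]

lemma Dmat_diag (L : ∀ r : Fin N, Matrix (Fin (m r)) (Fin (m r)) ℂ) (r : Fin N)
    (i : Fin (α r)) : diagLead α m (Dmat α m L) r i = L r := by
  ext a b
  show Dmat α m L ⟨r, (i, a)⟩ ⟨r, (i, b)⟩ = L r a b
  rw [Dmat_apply_eq, if_pos rfl]

end Stmt9Aux

open Stmt9Aux

/-- For matrices of form (0T0), the map `φ` sending `X` to the tuple of
leading Toeplitz coefficients of its diagonal blocks is multiplicative; `X` is invertible
iff all `φ(X)_r` are invertible; every invertible `X` of form (0T0) factors uniquely as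
`X = D·U` with `D` the block-diagonal repetition of the `φ(X)_r` and `U` of form (0T0)
with `φ(U)_r = I`; and the set `𝕌` of such `U` is a normal subgroup of `𝕋`. -/
theorem stmt9 (N : ℕ) (α m : Fin N → ℕ)
    (hαa : StrictAnti α) (hα1 : ∀ r, 0 < α r) (hm : ∀ r, 0 < m r) :
    -- (i) multiplicativity of the leading coefficients
    (∀ X Y, IsForm0T0 α m X → IsForm0T0 α m Y → ∀ r : Fin N,
      diagLead α m (X * Y) r ⟨0, hα1 r⟩ =
        diagLead α m X r ⟨0, hα1 r⟩ * diagLead α m Y r ⟨0, hα1 r⟩) ∧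
    -- (ii) invertibility criterion
    (∀ X, IsForm0T0 α m X →
      (IsUnit X ↔ ∀ r : Fin N, IsUnit (diagLead α m X r ⟨0, hα1 r⟩))) ∧
    -- (iii) unique factorization X = D · U
    (∀ X, IsForm0T0 α m X → IsUnit X →
      ∃ U, IsForm0T0 α m U ∧
        (∀ (r : Fin N) (i : Fin (α r)) (a b : Fin (m r)),
          U ⟨r, (i, a)⟩ ⟨r, (i, b)⟩ = if a = b then 1 else 0) ∧
        X = (Matrix.blockDiagonal' fun r =>
          Matrix.of fun p q : Fin (α r) × Fin (m r) =>
            if p.1 = q.1 then diagLead α m X r ⟨0, hα1 r⟩ p.2 q.2 else 0) * U ∧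
        ∀ U', IsForm0T0 α m U' →
          (∀ (r : Fin N) (i : Fin (α r)) (a b : Fin (m r)),
            U' ⟨r, (i, a)⟩ ⟨r, (i, b)⟩ = if a = b then 1 else 0) →
          X = (Matrix.blockDiagonal' fun r =>
            Matrix.of fun p q : Fin (α r) × Fin (m r) =>
              if p.1 = q.1 then diagLead α m X r ⟨0, hα1 r⟩ p.2 q.2 else 0) * U' →
          U' = U) ∧
    -- (iv) 𝕌 is a normal subgroup of 𝕋
    (∀ X U, IsForm0T0 α m X → IsUnit X → IsForm0T0 α m U → IsUnit U →
      (∀ (r : Fin N) (i : Fin (α r)) (a b : Fin (m r)),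
        U ⟨r, (i, a)⟩ ⟨r, (i, b)⟩ = if a = b then 1 else 0) →
      IsForm0T0 α m (X⁻¹ * U * X) ∧
        ∀ (r : Fin N) (i : Fin (α r)) (a b : Fin (m r)),
          (X⁻¹ * U * X) ⟨r, (i, a)⟩ ⟨r, (i, b)⟩ = if a = b then 1 else 0) := by
  refine ⟨?_, ?_, ?_, ?_⟩
  · intro X Y hX hY r
    exact diagLead_mul hαa hα1 hX hY r ⟨0, hα1 r⟩
  · intro X hX
    exact ⟨fun hu => diag_of_unit hαa hα1 hX hu, fun h => unit_of_diag hαa hα1 hX h⟩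
  · intro X hX hu
    set L : ∀ r : Fin N, Matrix (Fin (m r)) (Fin (m r)) ℂ :=
      fun r => diagLead α m X r ⟨0, hα1 r⟩ with hLdef
    have hDterm : (Matrix.blockDiagonal' fun r =>
        Matrix.of fun p q : Fin (α r) × Fin (m r) =>
          if p.1 = q.1 then diagLead α m X r ⟨0, hα1 r⟩ p.2 q.2 else 0) = Dmat α m L := rfl
    have hDform : IsForm0T0 α m (Dmat α m L) := form_of_comm (Dmat_comm L) hα1
    have hDunit : IsUnit (Dmat α m L) :=
      unit_of_diag hαa hα1 hDform fun r => by
        rw [Dmat_diag L r ⟨0, hα1 r⟩]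
        exact diag_of_unit hαa hα1 hX hu r
    have hDdet : IsUnit (Dmat α m L).det := (Matrix.isUnit_iff_isUnit_det _).mp hDunit
    have hDicomm : (Dmat α m L)⁻¹ * Hmat α m = Hmat α m * (Dmat α m L)⁻¹ :=
      comm_inv (Dmat_comm L) hDunit
    have hDi : IsForm0T0 α m (Dmat α m L)⁻¹ := form_of_comm hDicomm hα1
    have hUcomm : ((Dmat α m L)⁻¹ * X) * Hmat α m = Hmat α m * ((Dmat α m L)⁻¹ * X) := by
      rw [mul_assoc, comm_of_form hX, ← mul_assoc, hDicomm, mul_assoc]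
    have hUform : IsForm0T0 α m ((Dmat α m L)⁻¹ * X) := form_of_comm hUcomm hα1
    have hUdiag : ∀ (r : Fin N) (i : Fin (α r)),
        diagLead α m ((Dmat α m L)⁻¹ * X) r i = 1 := by
      intro r i
      have h1 : diagLead α m ((Dmat α m L)⁻¹ * Dmat α m L) r i = 1 := by
        rw [Matrix.nonsing_inv_mul _ hDdet, diagLead_one hα1]
      rw [diagLead_mul hαa hα1 hDi hDform r i, Dmat_diag] at h1
      rw [diagLead_mul hαa hα1 hDi hX r i]
      exact h1
    refine ⟨(Dmat α m L)⁻¹ * X, hUform, ?_, ?_, ?_⟩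
    · intro r i a b
      calc ((Dmat α m L)⁻¹ * X) ⟨r, (i, a)⟩ ⟨r, (i, b)⟩
          = diagLead α m ((Dmat α m L)⁻¹ * X) r i a b := rfl
        _ = (1 : Matrix (Fin (m r)) (Fin (m r)) ℂ) a b := by rw [hUdiag r i]
        _ = if a = b then 1 else 0 := Matrix.one_apply
    · rw [hDterm, ← mul_assoc, Matrix.mul_nonsing_inv _ hDdet, one_mul]
    · intro U' hU' hU'diag hXeq
      rw [hDterm] at hXeq
      rw [hXeq, ← mul_assoc, Matrix.nonsing_inv_mul _ hDdet, one_mul]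
  · intro X U hX hXu hU hUu hUdiag
    have hXdet : IsUnit X.det := (Matrix.isUnit_iff_isUnit_det X).mp hXu
    have hXicomm : X⁻¹ * Hmat α m = Hmat α m * X⁻¹ := comm_inv (comm_of_form hX) hXu
    have hXi : IsForm0T0 α m X⁻¹ := form_of_comm hXicomm hα1
    have hXiUcomm : (X⁻¹ * U) * Hmat α m = Hmat α m * (X⁻¹ * U) := by
      rw [mul_assoc, comm_of_form hU, ← mul_assoc, hXicomm, mul_assoc]
    have hXiU : IsForm0T0 α m (X⁻¹ * U) := form_of_comm hXiUcomm hα1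
    have hcomm : (X⁻¹ * U * X) * Hmat α m = Hmat α m * (X⁻¹ * U * X) := by
      rw [mul_assoc, comm_of_form hX, ← mul_assoc, hXiUcomm, mul_assoc]
    refine ⟨form_of_comm hcomm hα1, ?_⟩
    intro r i a b
    have hUdiag1 : diagLead α m U r ⟨0, hα1 r⟩ = 1 := by
      ext a' b'
      show U ⟨r, (⟨0, hα1 r⟩, a')⟩ ⟨r, (⟨0, hα1 r⟩, b')⟩ = _
      rw [hUdiag r ⟨0, hα1 r⟩ a' b', Matrix.one_apply]
    have hkey : diagLead α m (X⁻¹ * U * X) r i = 1 := by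
      rw [diagLead_mul hαa hα1 hXiU hX r i,
        diagLead_mul hαa hα1 hXi hU r ⟨0, hα1 r⟩, hUdiag1, mul_one,
        ← diagLead_mul hαa hα1 hXi hX r ⟨0, hα1 r⟩, Matrix.nonsing_inv_mul X hXdet,
        diagLead_one hα1]
    calc (X⁻¹ * U * X) ⟨r, (i, a)⟩ ⟨r, (i, b)⟩
        = diagLead α m (X⁻¹ * U * X) r i a b := rfl
      _ = (1 : Matrix (Fin (m r)) (Fin (m r)) ℂ) a b := by rw [hkey]
      _ = if a = b then 1 else 0 := Matrix.one_apply
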